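/- As s → ∞ one has H_s = (e^{−1/2} + o(1)) μ_{2s}; that is, the ratio H_s / μ_{2s} converges to e^{−1/2}. -/

import Mathlib

open Filter Finset Nat

def gm (m : ℕ) : ℕ := Nat.doubleFactorial (2*m - 1)

lemma gm_pos (m : ℕ) : 0 < gm m := Nat.doubleFactorial_pos _

lemma gm_succ (m : ℕ) : gm (m+1) = (2*m+1) * gm m := by
  cases m with
  | zero => rfl
  | succ n =>
    show (2*(n+2) - 1)‼ = _
    have h : 2*(n+2) - 1 = (2*(n+1)-1) + 2 := by omega
    rw [h, Nat.doubleFactorial_add_two]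
    show (2*(n+1)-1+2) * gm (n+1) = _
    congr 1

noncomputable def rat (s k : ℕ) : ℝ := (s.descFactorial k * gm (s-k) : ℕ) / (gm s : ℕ)

lemma rat_succ {s k : ℕ} (h : k + 1 ≤ s) :
    rat s (k+1) = ((s - k : ℕ) : ℝ) / ((2*(s-k) - 1 : ℕ) : ℝ) * rat s k := by
  have h2 : gm (s - k) = (2*(s-(k+1)) + 1) * gm (s - (k+1)) := by
    rw [show s - k = (s - (k+1)) + 1 by omega, gm_succ]
  have h3 : (2*(s-k) - 1 : ℕ) = 2*(s-(k+1)) + 1 := by omega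
  have hM : ((2*(s-(k+1)) + 1 : ℕ) : ℝ) ≠ 0 := by positivity
  have key : ∀ a d g M G : ℝ, M ≠ 0 → (a * d * g) / G = a / M * (d * (M * g) / G) := by
    intro a d g M G hM
    field_simp
  unfold rat
  rw [Nat.descFactorial_succ, h2, h3]
  simp only [Nat.cast_mul]
  exact key _ _ _ _ _ hM

lemma rat_nonneg (s k : ℕ) : 0 ≤ rat s k := by unfold rat; positivity

lemma rat_le_one : ∀ s k : ℕ, k ≤ s → rat s k ≤ 1 := by
  intro s k
  induction k with
  | zero =>
    intro _
    have hG : ((gm s : ℕ) : ℝ) ≠ 0 := by exact_mod_cast (gm_pos s).ne'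
    simp [rat, div_self hG]
  | succ k ih =>
    intro h
    rw [rat_succ h]
    have h1 : ((s - k : ℕ) : ℝ) / ((2*(s-k) - 1 : ℕ) : ℝ) ≤ 1 := by
      apply div_le_one_of_le₀
      · exact_mod_cast (by omega : s - k ≤ 2*(s-k) - 1)
      · positivity
    have h0 : (0:ℝ) ≤ ((s - k : ℕ) : ℝ) / ((2*(s-k) - 1 : ℕ) : ℝ) := by positivity
    calc _ ≤ 1 * 1 := mul_le_mul h1 (ih (by omega)) (rat_nonneg s k) zero_le_one
      _ = 1 := by ring

lemma tendsto_rat (k : ℕ) : Tendsto (fun s => rat s k) atTop (nhds ((1/2)^k)) := by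
  induction k with
  | zero =>
    rw [pow_zero]
    apply Tendsto.congr' _ tendsto_const_nhds
    filter_upwards [eventually_ge_atTop 0] with s _
    have hG : ((gm s : ℕ) : ℝ) ≠ 0 := by exact_mod_cast (gm_pos s).ne'
    simp [rat, div_self hG]
  | succ k ih =>
    have hf : Tendsto (fun s : ℕ => ((s - k : ℕ) : ℝ) / ((2*(s-k) - 1 : ℕ) : ℝ)) atTop
        (nhds (1/2)) := by
      have h1 : Tendsto (fun s : ℕ => ((s - k : ℕ) : ℝ)) atTop atTop :=
        tendsto_natCast_atTop_atTop.comp (tendsto_sub_atTop_nat k)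
      have key : Tendsto (fun x : ℝ => x / (2*x - 1)) atTop (nhds (1/2)) := by
        have h2 : Tendsto (fun x : ℝ => 2 - x⁻¹) atTop (nhds 2) := by
          have := (tendsto_const_nhds (x := (2:ℝ)) (f := atTop)).sub tendsto_inv_atTop_zero
          simpa using this
        have h3 : Tendsto (fun x : ℝ => (2 - x⁻¹)⁻¹) atTop (nhds (1/2)) := by
          simpa [one_div] using h2.inv₀ (by norm_num)
        apply Tendsto.congr' _ h3
        filter_upwards [eventually_ge_atTop 1] with x hx
        have hx0 : x ≠ 0 := by linarith
        have hx1 : 2*x - 1 ≠ 0 := by nlinarith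
        field_simp
      have hcomp := key.comp h1
      apply Tendsto.congr' _ hcomp
      filter_upwards [h1.eventually (eventually_ge_atTop 1)] with s hs
      have hsk : 1 ≤ s - k := by exact_mod_cast (hs : (1:ℝ) ≤ _)
      simp only [Function.comp]
      congr 1
      rw [Nat.cast_sub (by omega : 1 ≤ 2*(s-k)), Nat.cast_mul]
      norm_num
    have hmul := hf.mul ih
    rw [show (1:ℝ)/2 * (1/2)^k = (1/2)^(k+1) by ring] at hmul
    apply Tendsto.congr' _ hmul
    filter_upwards [eventually_ge_atTop (k+1)] with s hs
    rw [rat_succ hs]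



/-- `gaussMoment r` is the `r`-th moment `μ_r` of the standard Gaussian:
`μ_0 = 1`, `μ_{2n} = (2n-1)!!` and `μ_{2n+1} = 0`. -/
def gaussMoment (r : ℕ) : ℕ := if Even r then Nat.doubleFactorial (r - 1) else 0

/-- `Hs s = ∑_{j=0}^{s} C(s,j) (−1)^{s−j} μ_{2j}`. -/
def Hs (s : ℕ) : ℤ :=
  ∑ j ∈ Finset.range (s + 1),
    (s.choose j : ℤ) * (-1) ^ (s - j) * (gaussMoment (2 * j) : ℤ)

lemma gaussMoment_two_mul (m : ℕ) : gaussMoment (2*m) = gm m := by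
  simp [gaussMoment, gm, even_two_mul]

noncomputable def fR (s k : ℕ) : ℝ :=
  if k ≤ s then ((-1)^k * (s.choose k) * (gm (s-k) : ℕ) : ℝ) / (gm s : ℕ) else 0

lemma fR_eq {s k : ℕ} (h : k ≤ s) : fR s k = (-1)^k * rat s k / k ! := by
  have hk : ((k ! : ℕ) : ℝ) ≠ 0 := by positivity
  rw [fR, if_pos h, rat, Nat.descFactorial_eq_factorial_mul_choose]
  push_cast
  field_simp

lemma fR_bound (s k : ℕ) : ‖fR s k‖ ≤ 1 / k ! := by
  by_cases h : k ≤ s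
  · rw [fR_eq h]
    have h1 : ‖(-1:ℝ)^k * rat s k / ((k ! : ℕ) : ℝ)‖ = rat s k / ((k ! : ℕ) : ℝ) := by
      rw [Real.norm_eq_abs, abs_div, abs_mul, abs_pow, abs_neg, abs_one, one_pow, one_mul,
        abs_of_nonneg (rat_nonneg s k), abs_of_nonneg (by positivity : (0:ℝ) ≤ ((k ! : ℕ) : ℝ))]
    rw [h1]
    gcongr
    exact rat_le_one s k h
  · rw [fR, if_neg h, norm_zero]
    positivity

lemma fR_tendsto (k : ℕ) :
    Tendsto (fun s => fR s k) atTop (nhds ((-(1/2):ℝ)^k / k !)) := by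
  have h := ((tendsto_rat k).const_mul ((-1:ℝ)^k)).div_const ((k ! : ℕ) : ℝ)
  have hl : ((-1:ℝ)^k * (1/2)^k / ((k ! : ℕ) : ℝ)) = (-(1/2):ℝ)^k / ((k ! : ℕ) : ℝ) := by
    rw [neg_pow ((1/2 : ℝ))]
  rw [← hl]
  apply Filter.Tendsto.congr' _ h
  filter_upwards [eventually_ge_atTop k] with s hs
  exact (fR_eq hs).symm

lemma sum_eq (s : ℕ) : (Hs s : ℝ) / ((gm s : ℕ) : ℝ) = ∑' k, fR s k := by
  have h0 : Hs s = ∑ k ∈ Finset.range (s + 1),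
      (-1:ℤ)^k * (s.choose k) * (gm (s-k) : ℕ) := by
    rw [Hs, ← Finset.sum_range_reflect]
    apply Finset.sum_congr rfl
    intro k hk
    have hks : k ≤ s := by
      have := Finset.mem_range.mp hk; omega
    rw [show s + 1 - 1 - k = s - k by omega, Nat.choose_symm hks,
      show s - (s - k) = k by omega, gaussMoment_two_mul]
    ring
  rw [tsum_eq_sum (s := Finset.range (s+1)) (fun k hk => by
    rw [fR, if_neg (by simp at hk; omega)]), h0]
  push_cast
  rw [Finset.sum_div]
  apply Finset.sum_congr rfl
  intro k hk
  rw [fR, if_pos (by simp at hk; omega)]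


/-- As `s → ∞`, `H_s = (e^{−1/2} + o(1)) μ_{2s}`: the ratio `H_s / μ_{2s}`
converges to `e^{−1/2}`. -/
theorem Hs_div_gaussMoment_tendsto :
    Filter.Tendsto (fun s : ℕ => (Hs s : ℝ) / (gaussMoment (2 * s) : ℝ))
      Filter.atTop (nhds (Real.exp (-(1 / 2)))) := by
  have hsum : Summable (fun k : ℕ => 1 / ((k ! : ℕ) : ℝ)) := by
    simpa using Real.summable_pow_div_factorial 1
  have hmain := tendsto_tsum_of_dominated_convergence (𝓕 := Filter.atTop)
    (f := fun s k => fR s k) (g := fun k => (-(1/2):ℝ)^k / ((k ! : ℕ) : ℝ))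
    (bound := fun k => 1 / ((k ! : ℕ) : ℝ)) hsum fR_tendsto
    (Filter.Eventually.of_forall (fun s k => fR_bound s k))
  have hexp : ∑' k : ℕ, (-(1/2):ℝ)^k / ((k ! : ℕ) : ℝ) = Real.exp (-(1/2)) := by
    rw [Real.exp_eq_exp_ℝ, NormedSpace.exp_eq_tsum_div]
  rw [show Real.exp (-(1/2)) = ∑' k : ℕ, (-(1/2):ℝ)^k / ((k ! : ℕ) : ℝ) from hexp.symm]
  exact Tendsto.congr
    (fun s => by rw [show (gaussMoment (2*s) : ℝ) = ((gm s : ℕ) : ℝ) by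
        rw [gaussMoment_two_mul]]; exact (sum_eq s).symm) hmain
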